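/- If α and β are positive probability measures on Σ and S ∈ FREQ^α, then the ratio of self-informations I_μ(w)/I_β(w) converges to 1/(H_k(α) + D_k(α‖β)) as w → S, where μ is the uniform measure on Σ = {0,...,k−1}, H_k(α) = H(α)/log k, and D_k(α‖β) = D(α‖β)/log k. -/

import Mathlib

lemma list_sum_map_eq_sum_count {k : ℕ} (l : List (Fin k)) (f : Fin k → ℝ) :
    (l.map f).sum = ∑ a, (l.count a : ℝ) * f a := by
  induction l with
  | nil => simp
  | cons b t ih =>
      simp only [List.map_cons, List.sum_cons, ih, List.count_cons]
      push_cast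
      simp [add_mul, Finset.sum_add_distrib, ite_mul, Finset.sum_ite_eq']
      ring

/-- if `S ∈ FREQ^α` with `α, β` positive probability measures on
`Fin k`, then `I_μ(w)/I_β(w) → 1/(H_k(α) + D_k(α‖β))` as `w → S`, where
`I_μ(w) = |w| log k`, `H_k(α) = H(α)/log k`, `D_k(α‖β) = D(α‖β)/log k`. -/
theorem selfInfo_ratio_tendsto
    (k : ℕ) (hk : 2 ≤ k)
    (α β : Fin k → ℝ) (hαpos : ∀ a, 0 < α a) (hβpos : ∀ a, 0 < β a)
    (hα1 : ∑ a, α a = 1) (hβ1 : ∑ a, β a = 1)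
    (S : ℕ → Fin k)
    (hfreq : ∀ a : Fin k, Filter.Tendsto
      (fun n => (((List.range n).map S).count a : ℝ) / n) Filter.atTop (nhds (α a))) :
    Filter.Tendsto
      (fun n : ℕ => ((n : ℝ) * Real.logb 2 k) /
        (((List.range n).map S).map fun a => Real.logb 2 (β a)⁻¹).sum)
      Filter.atTop
      (nhds (((∑ a, α a * Real.logb 2 (α a)⁻¹) / Real.logb 2 k +
              (∑ a, α a * Real.logb 2 (α a / β a)) / Real.logb 2 k)⁻¹)) := by
  set L : ℝ := ∑ a, α a * Real.logb 2 (β a)⁻¹ with hL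
  -- each β a < 1
  have hβlt1 : ∀ a, β a < 1 := by
    intro a
    have hne : (Finset.univ.erase a).Nonempty := by
      have : 1 < Fintype.card (Fin k) := by simpa using lt_of_lt_of_le one_lt_two hk
      obtain ⟨b, hb⟩ := Fintype.exists_ne_of_one_lt_card this a
      exact ⟨b, Finset.mem_erase.mpr ⟨hb, Finset.mem_univ b⟩⟩
    have hsum : β a + ∑ b ∈ Finset.univ.erase a, β b = 1 := by
      rw [Finset.add_sum_erase _ _ (Finset.mem_univ a)]; exact hβ1
    have hpos : 0 < ∑ b ∈ Finset.univ.erase a, β b :=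
      Finset.sum_pos (fun b _ => hβpos b) hne
    linarith
  have hLpos : 0 < L := by
    have : Nonempty (Fin k) := ⟨⟨0, by omega⟩⟩
    refine Finset.sum_pos (fun a _ => ?_) Finset.univ_nonempty
    exact mul_pos (hαpos a)
      (Real.logb_pos one_lt_two ((one_lt_inv₀ (hβpos a)).mpr (hβlt1 a)))
  -- Sn / n → L
  have hC : Filter.Tendsto
      (fun n : ℕ => (((List.range n).map S).map fun a => Real.logb 2 (β a)⁻¹).sum / n)
      Filter.atTop (nhds L) := by
    have heq : ∀ n : ℕ,
        (((List.range n).map S).map fun a => Real.logb 2 (β a)⁻¹).sum / n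
          = ∑ a, (((List.range n).map S).count a : ℝ) / n * Real.logb 2 (β a)⁻¹ := by
      intro n
      rw [list_sum_map_eq_sum_count, Finset.sum_div]
      exact Finset.sum_congr rfl (fun a _ => by ring)
    simp only [heq]
    exact tendsto_finset_sum _ (fun a _ => (hfreq a).mul_const _)
  -- rewrite the main function
  have hfun : ∀ n : ℕ, ((n : ℝ) * Real.logb 2 k) /
        (((List.range n).map S).map fun a => Real.logb 2 (β a)⁻¹).sum
      = Real.logb 2 k /
        ((((List.range n).map S).map fun a => Real.logb 2 (β a)⁻¹).sum / n) := by
    intro n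
    rw [div_div_eq_mul_div, mul_comm]
  have hmain : Filter.Tendsto
      (fun n : ℕ => ((n : ℝ) * Real.logb 2 k) /
        (((List.range n).map S).map fun a => Real.logb 2 (β a)⁻¹).sum)
      Filter.atTop (nhds (Real.logb 2 k / L)) := by
    simp only [hfun]
    exact (tendsto_const_nhds.div hC hLpos.ne')
  -- identify the limit
  have hAB : (∑ a, α a * Real.logb 2 (α a)⁻¹) + (∑ a, α a * Real.logb 2 (α a / β a)) = L := by
    rw [hL, ← Finset.sum_add_distrib]
    refine Finset.sum_congr rfl (fun a _ => ?_)
    rw [← mul_add, Real.logb_inv, Real.logb_div (hαpos a).ne' (hβpos a).ne', Real.logb_inv]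
    ring
  have : ((∑ a, α a * Real.logb 2 (α a)⁻¹) / Real.logb 2 k +
      (∑ a, α a * Real.logb 2 (α a / β a)) / Real.logb 2 k)⁻¹ = Real.logb 2 k / L := by
    rw [← add_div, hAB, inv_div]
  rw [this]
  exact hmain
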